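/- Let N be a positive integer, A an N×N complex Hermitian matrix, z ∈ ℂ with Im z > 0, and G = (A − zI)⁻¹. Fix indices i ≠ j, let G^{(i)} = (π_i(A) − zI)⁻¹ and G^{(ij)} = (π_i(π_j(A)) − zI)⁻¹. Then G_{ij} = −G_{ii} G^{(i)}_{jj} ( A_{ij} − Σ_{k∉{i,j}} Σ_{l∉{i,j}} A_{ik} G^{(ij)}_{kl} A_{lj} ). -/

import Mathlib

open Matrix Finset

set_option linter.unusedSectionVars false
set_option linter.unusedVariables false

section aux
variable {n : Type*} [Fintype n] [DecidableEq n]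

lemma aux_isUnit (B : Matrix n n ℂ) (hB : B.IsHermitian) {z : ℂ}
    (hz : z.im ≠ 0) : IsUnit (B - z • (1 : Matrix n n ℂ)).det := by
  rw [isUnit_iff_ne_zero]
  have h1 : B - z • 1 = (hB.eigenvectorUnitary : Matrix n n ℂ) *
      (diagonal (RCLike.ofReal ∘ hB.eigenvalues) - z • 1) *
      (star (hB.eigenvectorUnitary : Matrix n n ℂ)) := by
    rw [mul_sub, sub_mul, ← Unitary.conjStarAlgAut_apply (S := ℂ), ← hB.spectral_theorem]
    congr 1
    rw [mul_smul_comm, smul_mul_assoc, mul_one,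
      (Matrix.mem_unitaryGroup_iff).mp hB.eigenvectorUnitary.2]
  rw [h1, Matrix.det_mul_right_comm,
    (Matrix.mem_unitaryGroup_iff).mp hB.eigenvectorUnitary.2, one_mul]
  rw [Matrix.smul_one_eq_diagonal, Matrix.diagonal_sub, Matrix.det_diagonal]
  refine Finset.prod_ne_zero_iff.mpr fun k _ hk => ?_
  have := congrArg Complex.im hk
  simp [RCLike.ofReal] at this
  exact hz this

lemma aux_inv_row (M : Matrix n n ℂ) (hM : IsUnit M.det) (s t : n) (c : ℂ) (hc : c ≠ 0)
    (hrow : ∀ y, M s y = if y = s then c else 0) (hts : t ≠ s) : M⁻¹ s t = 0 := by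
  have h := congrFun (congrFun (Matrix.mul_nonsing_inv M hM) s) t
  rw [Matrix.mul_apply] at h
  simp only [hrow, ite_mul, zero_mul] at h
  rw [Finset.sum_ite_eq' Finset.univ s (fun k => c * M⁻¹ k t)] at h
  simp [Matrix.one_apply, Ne.symm hts] at h
  rcases h with h | h
  · exact absurd h hc
  · exact h

lemma aux_inv_col (M : Matrix n n ℂ) (hM : IsUnit M.det) (s t : n) (c : ℂ) (hc : c ≠ 0)
    (hcol : ∀ y, M y s = if y = s then c else 0) (hts : t ≠ s) : M⁻¹ t s = 0 := by
  have h := congrFun (congrFun (Matrix.nonsing_inv_mul M hM) t) s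
  rw [Matrix.mul_apply] at h
  simp only [hcol, mul_ite, mul_zero] at h
  rw [Finset.sum_ite_eq' Finset.univ s (fun k => M⁻¹ t k * c)] at h
  simp [Matrix.one_apply, hts] at h
  rcases h with h | h
  · exact h
  · exact absurd h hc

lemma aux_resolvent (X Y : Matrix n n ℂ) (hX : IsUnit X.det) (hY : IsUnit Y.det) :
    X⁻¹ - Y⁻¹ = X⁻¹ * (Y - X) * Y⁻¹ := by
  rw [mul_sub, sub_mul, mul_assoc, Matrix.mul_nonsing_inv _ hY, mul_one,
    Matrix.nonsing_inv_mul _ hX, one_mul]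

lemma aux_resolvent' (X Y : Matrix n n ℂ) (hX : IsUnit X.det) (hY : IsUnit Y.det) :
    X⁻¹ - Y⁻¹ = Y⁻¹ * (Y - X) * X⁻¹ := by
  rw [mul_sub, sub_mul, Matrix.nonsing_inv_mul _ hY, one_mul, mul_assoc,
    Matrix.mul_nonsing_inv _ hX, mul_one]

lemma aux_pi_herm (B : Matrix n n ℂ) (hB : B.IsHermitian) (s : n) :
    (IsHermitian (fun x y => if x = s ∨ y = s then 0 else B x y : Matrix n n ℂ)) := by
  ext x y
  change star (if y = s ∨ x = s then (0 : ℂ) else B y x) = _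
  by_cases hx : x = s <;> by_cases hy : y = s <;>
    simp [hx, hy, hB.apply]

end aux

/-- With `G = (A − zI)⁻¹`, `G⁽ⁱ⁾ = (π_i(A) − zI)⁻¹` and
`G⁽ⁱʲ⁾ = (π_i(π_j(A)) − zI)⁻¹`, for `i ≠ j`,
`G_{ij} = −G_{ii} G⁽ⁱ⁾_{jj} (A_{ij} − ∑_{k,l∉{i,j}} A_{ik} G⁽ⁱʲ⁾_{kl} A_{lj})`. -/
theorem stmt_12 (N : ℕ) (hN : 0 < N) (A : Matrix (Fin N) (Fin N) ℂ)
    (hA : A.IsHermitian) (z : ℂ) (hz : 0 < z.im) (i j : Fin N) (hij : i ≠ j) :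
    let G := (A - z • (1 : Matrix (Fin N) (Fin N) ℂ))⁻¹
    let Ai : Matrix (Fin N) (Fin N) ℂ := fun x y => if x = i ∨ y = i then 0 else A x y
    let Gi := (Ai - z • (1 : Matrix (Fin N) (Fin N) ℂ))⁻¹
    let Aij : Matrix (Fin N) (Fin N) ℂ := fun x y =>
      if x = i ∨ y = i then 0 else if x = j ∨ y = j then 0 else A x y
    let Gij := (Aij - z • (1 : Matrix (Fin N) (Fin N) ℂ))⁻¹
    G i j = -(G i i) * Gi j j *
      (A i j - ∑ k ∈ Finset.univ \ {i, j}, ∑ l ∈ Finset.univ \ {i, j},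
        A i k * Gij k l * A l j) := by
  intro G Ai Gi Aij Gij
  have hzne : z.im ≠ 0 := ne_of_gt hz
  have hz0 : z ≠ 0 := fun h => by simp [h] at hz
  have hAi : Ai.IsHermitian := aux_pi_herm A hA i
  have hAj : IsHermitian
      (fun x y => if x = j ∨ y = j then 0 else A x y : Matrix (Fin N) (Fin N) ℂ) :=
    aux_pi_herm A hA j
  have hAij : Aij.IsHermitian := aux_pi_herm _ hAj i
  have hM : IsUnit (A - z • (1 : Matrix (Fin N) (Fin N) ℂ)).det := aux_isUnit A hA hzne
  have hMi : IsUnit (Ai - z • (1 : Matrix (Fin N) (Fin N) ℂ)).det := aux_isUnit Ai hAi hzne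
  have hMij : IsUnit (Aij - z • (1 : Matrix (Fin N) (Fin N) ℂ)).det := aux_isUnit Aij hAij hzne
  -- structure of Gi and Gij
  have hGi_row : ∀ t, t ≠ i → Gi i t = 0 := by
    intro t ht
    refine aux_inv_row _ hMi i t (-z) (neg_ne_zero.mpr hz0) ?_ ht
    intro y
    by_cases hy : y = i
    · rw [Matrix.sub_apply]; simp [Ai, Matrix.sub_apply, Matrix.smul_apply, Matrix.one_apply, hy]
    · rw [Matrix.sub_apply]; simp [Ai, Matrix.sub_apply, Matrix.smul_apply, Matrix.one_apply, hy, Ne.symm hy]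
  have hGij_colj : ∀ b, b ≠ j → Gij b j = 0 := by
    intro b hb
    refine aux_inv_col _ hMij j b (-z) (neg_ne_zero.mpr hz0) ?_ hb
    intro y
    by_cases hy : y = j
    · rw [Matrix.sub_apply]; simp [Aij, Matrix.sub_apply, Matrix.smul_apply, Matrix.one_apply, hy, Ne.symm hij]
    · rw [Matrix.sub_apply]; simp [Aij, Matrix.sub_apply, Matrix.smul_apply, Matrix.one_apply, hy, Ne.symm hy]
  have hGij_coli : ∀ b, b ≠ i → Gij b i = 0 := by
    intro b hb
    refine aux_inv_col _ hMij i b (-z) (neg_ne_zero.mpr hz0) ?_ hb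
    intro y
    by_cases hy : y = i
    · rw [Matrix.sub_apply]; simp [Aij, Matrix.sub_apply, Matrix.smul_apply, Matrix.one_apply, hy]
    · rw [Matrix.sub_apply]; simp [Aij, Matrix.sub_apply, Matrix.smul_apply, Matrix.one_apply, hy, Ne.symm hy]
  -- first resolvent expansion
  have hres1 : G - Gi = G * (Ai - A) * Gi := by
    have h := aux_resolvent (A - z • (1 : Matrix (Fin N) (Fin N) ℂ))
      (Ai - z • (1 : Matrix (Fin N) (Fin N) ℂ)) hM hMi
    rw [sub_sub_sub_cancel_right] at h
    exact h
  have hD1 : ∀ a b, (Ai - A) a b = if a = i ∨ b = i then -A a b else 0 := by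
    intro a b
    rw [Matrix.sub_apply]
    by_cases h : a = i ∨ b = i <;> simp [Ai, Matrix.sub_apply, h]
  have e1 : G i j = ∑ a, ∑ b, G i a * (Ai - A) a b * Gi b j := by
    have h := congrFun (congrFun hres1 i) j
    rw [Matrix.sub_apply, hGi_row j (Ne.symm hij), sub_zero] at h
    rw [h, Matrix.mul_apply]
    simp_rw [Matrix.mul_apply, Finset.sum_mul]
    exact Finset.sum_comm
  have e2 : G i j = -(G i i) * ∑ b, A i b * Gi b j := by
    have h1 : ∀ a ∈ Finset.univ, a ≠ i →
        (∑ b, G i a * (Ai - A) a b * Gi b j) = 0 := by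
      intro a _ ha
      refine Finset.sum_eq_zero fun b _ => ?_
      by_cases hb : b = i
      · subst hb; rw [hGi_row j (Ne.symm hij), mul_zero]
      · rw [hD1]; simp [ha, hb]
    rw [e1, Finset.sum_eq_single i h1 (by simp)]
    have h2 : ∀ b : Fin N, G i i * (Ai - A) i b * Gi b j = -(G i i) * (A i b * Gi b j) := by
      intro b
      rw [hD1]; simp; ring
    simp_rw [h2, ← Finset.mul_sum]
  -- second resolvent expansion
  have hres2 : Gi - Gij = Gij * (Aij - Ai) * Gi := by
    have h := aux_resolvent' (Ai - z • (1 : Matrix (Fin N) (Fin N) ℂ))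
      (Aij - z • (1 : Matrix (Fin N) (Fin N) ℂ)) hMi hMij
    rw [sub_sub_sub_cancel_right] at h
    exact h
  have hD2 : ∀ a c, (Aij - Ai) a c =
      if a = i ∨ c = i then 0 else if a = j ∨ c = j then -A a c else 0 := by
    intro a c
    rw [Matrix.sub_apply]
    by_cases h1 : a = i ∨ c = i
    · simp [Aij, Ai, Matrix.sub_apply, h1]
    · by_cases h2 : a = j ∨ c = j <;> simp [Aij, Ai, Matrix.sub_apply, h1, h2]
  have key2 : ∀ b, b ≠ i → b ≠ j →
      Gi b j = -(Gi j j) * ∑ a ∈ Finset.univ \ {i, j}, Gij b a * A a j := by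
    intro b hbi hbj
    have h := congrFun (congrFun hres2 b) j
    rw [Matrix.sub_apply, hGij_colj b hbj, sub_zero] at h
    rw [h, Matrix.mul_apply]
    have hc : ∀ c ∈ Finset.univ, c ≠ j →
        (Gij * (Aij - Ai)) b c * Gi c j = 0 := by
      intro c _ hcj
      refine mul_eq_zero_of_left ?_ _
      rw [Matrix.mul_apply]
      refine Finset.sum_eq_zero fun a _ => ?_
      by_cases haj : a = j
      · subst haj; rw [hGij_colj b hbj, zero_mul]
      · rw [hD2]; simp [haj, hcj]
    rw [Finset.sum_eq_single j hc (by simp), Matrix.mul_apply]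
    have hvanish : ∀ a ∈ Finset.univ, a ∉ Finset.univ \ ({i, j} : Finset (Fin N)) →
        Gij b a * (Aij - Ai) a j = 0 := by
      intro a _ ha
      simp only [Finset.mem_sdiff, Finset.mem_univ, true_and, not_not,
        Finset.mem_insert, Finset.mem_singleton] at ha
      rcases ha with rfl | rfl
      · rw [hD2]; simp
      · rw [hGij_colj b hbj, zero_mul]
    rw [← Finset.sum_subset (Finset.sdiff_subset) hvanish]
    have hterm : ∀ a ∈ Finset.univ \ ({i, j} : Finset (Fin N)),
        Gij b a * (Aij - Ai) a j = -(Gij b a * A a j) := by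
      intro a ha
      simp only [Finset.mem_sdiff, Finset.mem_univ, true_and, Finset.mem_insert,
        Finset.mem_singleton, not_or] at ha
      rw [hD2]; simp [ha.1, ha.2, Ne.symm hij]
    rw [Finset.sum_congr rfl hterm, Finset.sum_mul, Finset.mul_sum]
    exact Finset.sum_congr rfl fun a _ => by ring
  -- assembly
  have split : ∑ b, A i b * Gi b j
      = A i j * Gi j j + ∑ b ∈ Finset.univ \ {i, j}, A i b * Gi b j := by
    rw [← Finset.sum_sdiff (Finset.subset_univ ({i, j} : Finset (Fin N))),
      Finset.sum_pair hij, hGi_row j (Ne.symm hij)]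
    ring
  have final_sum : ∑ b ∈ Finset.univ \ {i, j}, A i b * Gi b j
      = -(Gi j j) * ∑ k ∈ Finset.univ \ {i, j}, ∑ l ∈ Finset.univ \ {i, j},
          A i k * Gij k l * A l j := by
    rw [Finset.mul_sum]
    refine Finset.sum_congr rfl fun b hb => ?_
    have hb' := Finset.mem_sdiff.mp hb
    simp only [Finset.mem_insert, Finset.mem_singleton, not_or] at hb'
    rw [key2 b hb'.2.1 hb'.2.2]
    simp only [Finset.mul_sum]
    exact Finset.sum_congr rfl fun a _ => by ring
  rw [e2, split, final_sum]
  ring
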